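/- arXiv:2301.09020 — 3 statements merged into one kernel-verified Lean document; each statement's English description precedes it below -/
import Mathlib

section
/- (Gill's identity.) For every real t > 0, the product of the failure and censoring product-limit estimators recovers the empirical at-risk fraction: Ŝ_PL(t) · K̂(t) = Y(t+)/n. -/
open Finset
open scoped Classical

noncomputable section

namespace SurvStmt

/-- The finite set of distinct observed times `{X_1, …, X_n}`. -/
def times {n : ℕ} (X : Fin n → ℝ) : Finset ℝ := Finset.image X Finset.univ

/-- `Y(t) = #{i : X_i ≥ t}`, as a real number. -/
def Yat {n : ℕ} (X : Fin n → ℝ) (t : ℝ) : ℝ :=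
  ((Finset.univ.filter (fun i => t ≤ X i)).card : ℝ)

/-- `Y(t+) = #{i : X_i > t}`, as a real number. -/
def Yplus {n : ℕ} (X : Fin n → ℝ) (t : ℝ) : ℝ :=
  ((Finset.univ.filter (fun i => t < X i)).card : ℝ)

/-- `ΔN(t) = #{i : X_i = t, D_i = 1}`, as a real number. -/
def dN {n : ℕ} (X : Fin n → ℝ) (D : Fin n → Bool) (t : ℝ) : ℝ :=
  ((Finset.univ.filter (fun i => X i = t ∧ D i = true)).card : ℝ)

/-- `ΔC(t) = #{i : X_i = t, D_i = 0}`, as a real number. -/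
def dC {n : ℕ} (X : Fin n → ℝ) (D : Fin n → Bool) (t : ℝ) : ℝ :=
  ((Finset.univ.filter (fun i => X i = t ∧ D i = false)).card : ℝ)

/-- `Y†(t) = Y(t) − ΔN(t)`. -/
def Ydag {n : ℕ} (X : Fin n → ℝ) (D : Fin n → Bool) (t : ℝ) : ℝ :=
  Yat X t - dN X D t

/-- `τ = max_i X_i`, the largest observation time (0 if there is no data). -/
def tau {n : ℕ} (X : Fin n → ℝ) : ℝ := ((times X).max).unbotD 0

/-- Censoring product-limit estimator `K̂(t) = ∏_{u ≤ t} (1 − ΔC(u)/Y†(u))`. -/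
def Khat {n : ℕ} (X : Fin n → ℝ) (D : Fin n → Bool) (t : ℝ) : ℝ :=
  ∏ u ∈ (times X).filter (fun u => u ≤ t), (1 - dC X D u / Ydag X D u)

/-- Left limit `K̂(t−) = ∏_{u < t} (1 − ΔC(u)/Y†(u))`. -/
def Kminus {n : ℕ} (X : Fin n → ℝ) (D : Fin n → Bool) (t : ℝ) : ℝ :=
  ∏ u ∈ (times X).filter (fun u => u < t), (1 - dC X D u / Ydag X D u)

/-- Failure product-limit estimator `Ŝ_PL(t) = ∏_{u ≤ t} (1 − ΔN(u)/Y(u))`. -/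
def SPL {n : ℕ} (X : Fin n → ℝ) (D : Fin n → Bool) (t : ℝ) : ℝ :=
  ∏ u ∈ (times X).filter (fun u => u ≤ t), (1 - dN X D u / Yat X u)

/-- Left limit `Ŝ_PL(t−) = ∏_{u < t} (1 − ΔN(u)/Y(u))`. -/
def SPLminus {n : ℕ} (X : Fin n → ℝ) (D : Fin n → Bool) (t : ℝ) : ℝ :=
  ∏ u ∈ (times X).filter (fun u => u < t), (1 - dN X D u / Yat X u)

/-- IPCW estimator `F̂_IPCW(t) = (1/n) ∑_i D_i 1{X_i ≤ t} / K̂(X_i−)`. -/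
def FIPCW {n : ℕ} (X : Fin n → ℝ) (D : Fin n → Bool) (t : ℝ) : ℝ :=
  (1 / (n : ℝ)) * ∑ i : Fin n,
    (if D i = true then (1 : ℝ) else 0) * (if X i ≤ t then (1 : ℝ) else 0) / Kminus X D (X i)

/-- IPCW survival estimator `S̃_IPCW(t) = (1/n) ∑_i D_i 1{X_i > t} / K̂(X_i−)`. -/
def SIPCW {n : ℕ} (X : Fin n → ℝ) (D : Fin n → Bool) (t : ℝ) : ℝ :=
  (1 / (n : ℝ)) * ∑ i : Fin n,
    (if D i = true then (1 : ℝ) else 0) * (if t < X i then (1 : ℝ) else 0) / Kminus X D (X i)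

/-- RTTR jump weight `J(v) = 1/(n · K̂(v−))`. -/
def Jw {n : ℕ} (X : Fin n → ℝ) (D : Fin n → Bool) (v : ℝ) : ℝ :=
  1 / ((n : ℝ) * Kminus X D v)

/-- Redistribute-to-the-right estimator
`Ŝ_RTTR(t) = 1 − ∑_{v ≤ t} [J(v) ΔN(v) 1{v < τ} + J(τ) Y(τ) 1{v = τ}]`. -/
def SRTTR {n : ℕ} (X : Fin n → ℝ) (D : Fin n → Bool) (t : ℝ) : ℝ :=
  1 - ∑ v ∈ (times X).filter (fun v => v ≤ t),
      (Jw X D v * dN X D v * (if v < tau X then (1 : ℝ) else 0)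
        + Jw X D (tau X) * Yat X (tau X) * (if v = tau X then (1 : ℝ) else 0))

lemma count_split {n : ℕ} (X : Fin n → ℝ) (D : Fin n → Bool) (t : ℝ) :
    Yat X t = Yplus X t + dN X D t + dC X D t := by
  unfold Yat Yplus dN dC
  rw [Finset.card_filter, Finset.card_filter, Finset.card_filter, Finset.card_filter]
  push_cast
  rw [← Finset.sum_add_distrib, ← Finset.sum_add_distrib]
  apply Finset.sum_congr rfl
  intro i _
  rcases lt_trichotomy t (X i) with h | h | h <;> cases hD : D i <;>
    simp_all <;> split_ifs <;> simp_all <;> linarith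

lemma Yat_pos {n : ℕ} (X : Fin n → ℝ) {u : ℝ} (hu : u ∈ times X) :
    0 < Yat X u := by
  simp only [times, Finset.mem_image] at hu
  obtain ⟨i, _, hi⟩ := hu
  unfold Yat
  have : i ∈ Finset.univ.filter (fun j => u ≤ X j) := by
    simp [hi.ge]
  have := Finset.card_pos.mpr ⟨i, this⟩
  exact_mod_cast this

lemma point {n : ℕ} (X : Fin n → ℝ) (D : Fin n → Bool) {u : ℝ} (hu : u ∈ times X) :
    (1 - dN X D u / Yat X u) * (1 - dC X D u / Ydag X D u)
      = Yplus X u / Yat X u := by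
  have hY : 0 < Yat X u := Yat_pos X hu
  have hsplit := count_split X D u
  have hCnn : 0 ≤ dC X D u := by unfold dC; positivity
  have hPnn : 0 ≤ Yplus X u := by unfold Yplus; positivity
  by_cases hd : Ydag X D u = 0
  · have hdN : dN X D u = Yat X u := by unfold Ydag at hd; linarith
    have hC0 : dC X D u = 0 := by unfold Ydag at hd; linarith
    have hP0 : Yplus X u = 0 := by unfold Ydag at hd; linarith
    rw [hdN, hC0, hP0, div_self hY.ne']
    simp
  · have hYd : Ydag X D u = Yat X u - dN X D u := rfl
    have hP : Yplus X u = Yat X u - dN X D u - dC X D u := by linarith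
    field_simp
    rw [hYd, hP]

/-- Telescoping: for a downward-closed (within `times X`) subset `s`,
the product of at-risk ratios telescopes. -/
lemma tele {n : ℕ} (X : Fin n → ℝ) :
    ∀ (k : ℕ) (s : Finset ℝ), s.card = k → s ⊆ times X →
      (∀ u ∈ times X, ∀ v ∈ s, u ≤ v → u ∈ s) →
      (∏ u ∈ s, Yplus X u / Yat X u) * n
        = if h : s.Nonempty then Yplus X (s.max' h) else (n : ℝ) := by
  intro k
  induction k with
  | zero =>
    intro s hcard _ _
    rw [Finset.card_eq_zero.mp hcard]
    simp
  | succ k ih =>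
    intro s hcard hsub hdc
    have hne : s.Nonempty := Finset.card_pos.mp (by omega)
    set m := s.max' hne with hm
    have hmem : m ∈ s := s.max'_mem hne
    rw [dif_pos hne, ← Finset.mul_prod_erase _ _ hmem]
    have hcard' : (s.erase m).card = k := by
      rw [Finset.card_erase_of_mem hmem]; omega
    have hsub' : s.erase m ⊆ times X := (Finset.erase_subset _ _).trans hsub
    have hdc' : ∀ u ∈ times X, ∀ v ∈ s.erase m, u ≤ v → u ∈ s.erase m := by
      intro u hu v hv huv
      have hvs := Finset.mem_of_mem_erase hv
      have hvm : v < m := lt_of_le_of_ne (s.le_max' v hvs) (Finset.ne_of_mem_erase hv)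
      have hus : u ∈ s := hdc u hu v hvs huv
      exact Finset.mem_erase.mpr ⟨by intro h; exact absurd (h ▸ huv) (not_le.mpr hvm), hus⟩
    have hrec := ih (s.erase m) hcard' hsub' hdc'
    -- key: the "previous" value equals Yat X m
    have hkey : (if h : (s.erase m).Nonempty then Yplus X ((s.erase m).max' h)
        else (n : ℝ)) = Yat X m := by
      split_ifs with h
      · set m' := (s.erase m).max' h with hm'
        have hm'mem : m' ∈ s.erase m := (s.erase m).max'_mem h
        have hm'lt : m' < m :=
          lt_of_le_of_ne (s.le_max' m' (Finset.mem_of_mem_erase hm'mem))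
            (Finset.ne_of_mem_erase hm'mem)
        unfold Yplus Yat
        congr 1
        congr 1
        apply Finset.filter_congr
        intro i _
        constructor
        · intro hgt
          by_contra hlt
          push_neg at hlt
          have hit : X i ∈ times X := Finset.mem_image_of_mem X (Finset.mem_univ i)
          have his : X i ∈ s := hdc _ hit m hmem hlt.le
          have : X i ∈ s.erase m := Finset.mem_erase.mpr ⟨ne_of_lt hlt, his⟩
          exact absurd ((s.erase m).le_max' _ this) (not_le.mpr hgt)
        · intro hge; exact lt_of_lt_of_le hm'lt hge
      · -- s = {m}, so Yat X m = n
        have hseq : s = {m} := by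
          apply Finset.eq_singleton_iff_unique_mem.mpr
          refine ⟨hmem, fun x hx => ?_⟩
          by_contra hne'
          exact h ⟨x, Finset.mem_erase.mpr ⟨hne', hx⟩⟩
        unfold Yat
        have : Finset.univ.filter (fun i => m ≤ X i) = (Finset.univ : Finset (Fin n)) := by
          apply Finset.filter_true_of_mem
          intro i _
          by_contra hlt
          push_neg at hlt
          have hit : X i ∈ times X := Finset.mem_image_of_mem X (Finset.mem_univ i)
          have his : X i ∈ s := hdc _ hit m hmem hlt.le
          rw [hseq, Finset.mem_singleton] at his
          exact absurd his (ne_of_lt hlt)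
        rw [this, Finset.card_univ, Fintype.card_fin]
    have hYm : 0 < Yat X m := Yat_pos X (hsub hmem)
    rw [mul_comm (Yplus X m / Yat X m), mul_assoc, mul_comm (Yplus X m / Yat X m),
      ← mul_assoc, hrec, hkey]
    field_simp
    rfl

/-- Gill's identity: for every `t > 0`, `Ŝ_PL(t) · K̂(t) = Y(t+)/n`. -/
theorem stmt4 (n : ℕ) (hn : 0 < n) (X : Fin n → ℝ) (D : Fin n → Bool)
    (hX : ∀ i, 0 < X i) :
    ∀ t : ℝ, 0 < t →
      SPL X D t * Khat X D t = Yplus X t / (n : ℝ) := by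
  intro t ht
  have hnR : (0 : ℝ) < n := by exact_mod_cast hn
  unfold SPL Khat
  rw [← Finset.prod_mul_distrib]
  set s := (times X).filter (fun u => u ≤ t) with hs
  have hsub : s ⊆ times X := Finset.filter_subset _ _
  have hdc : ∀ u ∈ times X, ∀ v ∈ s, u ≤ v → u ∈ s := by
    intro u hu v hv huv
    rw [hs, Finset.mem_filter] at hv ⊢
    exact ⟨hu, huv.trans hv.2⟩
  have hprod : (∏ u ∈ s, (1 - dN X D u / Yat X u) * (1 - dC X D u / Ydag X D u))
      = ∏ u ∈ s, Yplus X u / Yat X u := by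
    apply Finset.prod_congr rfl
    intro u hu
    exact point X D (hsub hu)
  rw [hprod]
  have htel := tele X s.card s rfl hsub hdc
  have hfinal : (if h : s.Nonempty then Yplus X (s.max' h) else (n : ℝ)) = Yplus X t := by
    split_ifs with h
    · set m := s.max' h with hm
      have hmem : m ∈ s := s.max'_mem h
      have hmt : m ≤ t := (Finset.mem_filter.mp hmem).2
      unfold Yplus
      congr 1
      congr 1
      apply Finset.filter_congr
      intro i _
      constructor
      · intro hgt
        by_contra hle
        push_neg at hle
        have hit : X i ∈ times X := Finset.mem_image_of_mem X (Finset.mem_univ i)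
        have his : X i ∈ s := Finset.mem_filter.mpr ⟨hit, hle⟩
        exact absurd (s.le_max' _ his) (not_le.mpr hgt)
      · intro hgt; exact lt_of_le_of_lt hmt hgt
    · -- no observation ≤ t, so all X i > t
      unfold Yplus
      have : Finset.univ.filter (fun i => t < X i) = (Finset.univ : Finset (Fin n)) := by
        apply Finset.filter_true_of_mem
        intro i _
        by_contra hle
        push_neg at hle
        have hit : X i ∈ times X := Finset.mem_image_of_mem X (Finset.mem_univ i)
        exact h ⟨X i, Finset.mem_filter.mpr ⟨hit, hle⟩⟩
      rw [this, Finset.card_univ, Fintype.card_fin]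
  rw [hfinal] at htel
  rw [eq_div_iff hnR.ne']
  exact htel

end SurvStmt
end
end

section
/- (Redistribute-to-the-right jump sizes are IPCW weights.) For every observed time v ∈ {X_1,…,X_n}, the quantity (1/n) · ∏_{u < v} (1 + ΔC(u)/Y(u+)) equals 1/(n · K̂(v−)). -/
open Finset
open scoped Classical

noncomputable section

namespace SurvStmt

/-- RTTR jump sizes are IPCW weights: for every observed time `v`,
`(1/n) ∏_{u < v} (1 + ΔC(u)/Y(u+)) = 1/(n K̂(v−))`. -/
theorem stmt15 (n : ℕ) (hn : 0 < n) (X : Fin n → ℝ) (D : Fin n → Bool)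
    (hX : ∀ i, 0 < X i) :
    ∀ v ∈ times X,
      (1 / (n : ℝ)) * ∏ u ∈ (times X).filter (fun u => u < v),
          (1 + dC X D u / Yplus X u)
        = 1 / ((n : ℝ) * Kminus X D v) := by
  intro v hv
  obtain ⟨j, _, hj⟩ := Finset.mem_image.mp hv
  have key : ∀ u ∈ (times X).filter (fun u => u < v),
      (1 + dC X D u / Yplus X u) = (1 - dC X D u / Ydag X D u)⁻¹ := by
    intro u hu
    have huv : u < v := (Finset.mem_filter.mp hu).2
    have hYp : (0 : ℝ) < Yplus X u := by
      have : j ∈ Finset.univ.filter (fun i => u < X i) := by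
        simp [hj, huv]
      have : 0 < (Finset.univ.filter (fun i => u < X i)).card :=
        Finset.card_pos.mpr ⟨j, this⟩
      unfold Yplus; exact_mod_cast this
    have hsplit : Yat X u = Yplus X u + dN X D u + dC X D u := by
      unfold Yat Yplus dN dC
      have h1 : (Finset.univ.filter (fun i => u ≤ X i)).card
          = (Finset.univ.filter (fun i => u < X i)).card
            + (Finset.univ.filter (fun i => X i = u)).card := by
        rw [← Finset.card_union_of_disjoint]
        · congr 1
          ext i
          simp only [Finset.mem_union, Finset.mem_filter, Finset.mem_univ, true_and]
          constructor
          · intro h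
            rcases lt_or_eq_of_le h with h' | h'
            · exact Or.inl h'
            · exact Or.inr h'.symm
          · rintro (h | h)
            · exact le_of_lt h
            · exact le_of_eq h.symm
        · rw [Finset.disjoint_left]
          intro i hi hi'
          simp only [Finset.mem_filter, Finset.mem_univ, true_and] at hi hi'
          exact absurd hi' (by linarith)
      have h2 : (Finset.univ.filter (fun i => X i = u)).card
          = (Finset.univ.filter (fun i => X i = u ∧ D i = true)).card
            + (Finset.univ.filter (fun i => X i = u ∧ D i = false)).card := by
        rw [← Finset.card_union_of_disjoint]
        · congr 1
          ext i
          simp only [Finset.mem_union, Finset.mem_filter, Finset.mem_univ, true_and]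
          rcases Bool.eq_false_or_eq_true (D i) with h | h <;> tauto
        · rw [Finset.disjoint_left]
          intro i hi hi'
          simp only [Finset.mem_filter, Finset.mem_univ, true_and] at hi hi'
          simp [hi.2] at hi'
      push_cast [h1, h2]
      ring
    have hDag : Ydag X D u = Yplus X u + dC X D u := by
      unfold Ydag; rw [hsplit]; ring
    have hdC : (0 : ℝ) ≤ dC X D u := by unfold dC; positivity
    have hne : Yplus X u + dC X D u ≠ 0 := by positivity
    rw [hDag]
    field_simp
    rw [add_sub_cancel_right, div_self (ne_of_gt hYp)]
  rw [Finset.prod_congr rfl key, Finset.prod_inv_distrib]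
  unfold Kminus
  rw [one_div, one_div, mul_inv]


end SurvStmt
end
end

section
/- (Conservation of mass in the redistribute-to-the-right algorithm.) With J(v) := 1/(n · K̂(v−)) for each observed time v ∈ {X_1,…,X_n}, the total redistributed mass equals one: ∑_{v observed, v < τ} J(v) · ΔN(v) + Y(τ) · J(τ) = 1. -/
open Finset
open scoped Classical

noncomputable section

namespace SurvStmt

-- helpers

variable {n : ℕ} (X : Fin n → ℝ) (D : Fin n → Bool)

lemma Yat_split (v : ℝ) : Yat X v = dN X D v + dC X D v + Yplus X v := by
  unfold Yat dN dC Yplus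
  push_cast
  rw [Finset.card_filter, Finset.card_filter, Finset.card_filter, Finset.card_filter]
  push_cast
  rw [← Finset.sum_add_distrib, ← Finset.sum_add_distrib]
  refine Finset.sum_congr rfl fun i _ => ?_
  rcases lt_trichotomy (X i) v with h | h | h
  · simp [h.ne, not_le.mpr h, asymm h]
  · cases hD : D i <;> simp [h, hD]
  · simp [h.ne', h.le, h]

lemma dC_nonneg (v : ℝ) : 0 ≤ dC X D v := Nat.cast_nonneg _

lemma Yplus_pos {v : ℝ} (h : ∃ j, v < X j) : 0 < Yplus X v := by
  unfold Yplus
  have : (Finset.univ.filter (fun i => v < X i)).Nonempty := by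
    obtain ⟨j, hj⟩ := h
    exact ⟨j, by simp [hj]⟩
  exact_mod_cast Finset.card_pos.mpr this

lemma Ydag_eq (v : ℝ) : Ydag X D v = dC X D v + Yplus X v := by
  unfold Ydag; rw [Yat_split X D v]; ring

lemma factor_eq {v : ℝ} (h : 0 < Yplus X v) :
    1 - dC X D v / Ydag X D v = Yplus X v / Ydag X D v := by
  have hd : Ydag X D v ≠ 0 := by
    rw [Ydag_eq]; nlinarith [dC_nonneg X D v]
  rw [one_sub_div hd, Ydag_eq]; ring_nf

lemma factor_pos {v : ℝ} (h : ∃ j, v < X j) :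
    0 < 1 - dC X D v / Ydag X D v := by
  have hp := Yplus_pos X h
  rw [factor_eq X D hp]
  have hd : 0 < Ydag X D v := by
    rw [Ydag_eq]; nlinarith [dC_nonneg X D v]
  exact div_pos hp hd

lemma Kminus_pos {v : ℝ} (h : ∃ j, v ≤ X j) : 0 < Kminus X D v := by
  unfold Kminus
  refine Finset.prod_pos fun u hu => ?_
  obtain ⟨j, hj⟩ := h
  exact factor_pos X D ⟨j, lt_of_lt_of_le (Finset.mem_filter.mp hu).2 hj⟩

lemma mem_times {v : ℝ} (hv : v ∈ times X) : ∃ j, X j = v := by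
  simpa [times, eq_comm] using hv

/-- Per-step identity for consecutive observed times. -/
lemma step {v w : ℝ} (hv : v ∈ times X) (hw : w ∈ times X) (hvw : v < w)
    (hcons : ∀ u ∈ times X, u < w → u ≤ v) :
    Jw X D v * dN X D v = Yat X v * Jw X D v - Yat X w * Jw X D w := by
  obtain ⟨j, hj⟩ := mem_times X hw
  have hYp : 0 < Yplus X v := Yplus_pos X ⟨j, hj ▸ hvw⟩
  have hKv : 0 < Kminus X D v := Kminus_pos X D ⟨j, hj ▸ hvw.le⟩
  -- Yat w = Yplus v
  have hYw : Yat X w = Yplus X v := by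
    unfold Yat Yplus
    congr 1
    congr 1
    ext i
    simp only [Finset.mem_filter, Finset.mem_univ, true_and]
    constructor
    · intro h; exact lt_of_lt_of_le hvw h
    · intro h
      by_contra hlt
      push_neg at hlt
      exact absurd (hcons (X i) (by simp [times]) hlt) (not_le.mpr h)
  -- Kminus w = (1 - dC v/Ydag v) * Kminus v
  have hfilter : (times X).filter (fun u => u < w)
      = insert v ((times X).filter (fun u => u < v)) := by
    ext u
    simp only [Finset.mem_filter, Finset.mem_insert]
    constructor
    · rintro ⟨hu, huw⟩
      rcases eq_or_lt_of_le (hcons u hu huw) with h | h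
      · exact Or.inl h
      · exact Or.inr ⟨hu, h⟩
    · rintro (rfl | ⟨hu, huv⟩)
      · exact ⟨hv, hvw⟩
      · exact ⟨hu, huv.trans hvw⟩
  have hKw : Kminus X D w = (1 - dC X D v / Ydag X D v) * Kminus X D v := by
    unfold Kminus
    rw [hfilter, Finset.prod_insert (by simp)]
  have hfe := factor_eq X D (v := v) hYp
  have hdag : 0 < Ydag X D v := by
    rw [Ydag_eq]; nlinarith [dC_nonneg X D v]
  have hdN : dN X D v = Yat X v - Ydag X D v := by unfold Ydag; ring
  have hn0 : (n : ℝ) ≠ 0 := Nat.cast_ne_zero.mpr j.pos.ne'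
  unfold Jw
  rw [hKw, hfe, hYw, hdN]
  field_simp

/-- conservation of mass in RTTR: with `J(v) = 1/(n K̂(v−))`,
`∑_{v observed, v < τ} J(v) ΔN(v) + Y(τ) J(τ) = 1`. -/
theorem stmt16 (n : ℕ) (hn : 0 < n) (X : Fin n → ℝ) (D : Fin n → Bool)
    (hX : ∀ i, 0 < X i) :
    ∑ v ∈ (times X).filter (fun v => v < tau X), Jw X D v * dN X D v
      + Yat X (tau X) * Jw X D (tau X) = 1 := by
  classical
  have hne : (times X).Nonempty := ⟨X ⟨0, hn⟩, Finset.mem_image_of_mem X (Finset.mem_univ _)⟩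
  have htau : tau X = (times X).max' hne := by
    unfold tau
    rw [← Finset.coe_max' hne]
    rfl
  set m := (times X).card with hmc
  have hm : 0 < m := Finset.card_pos.mpr hne
  set e := (times X).orderIsoOfFin hmc.symm with he
  set t : ℕ → ℝ := fun j => (e ⟨min j (m-1), by omega⟩ : ℝ) with ht
  have ht_mem : ∀ j, t j ∈ times X := fun j => (e _).2
  have ht_mono : ∀ {j k : ℕ}, j ≤ k → t j ≤ t k := by
    intro j k hjk
    have h1 : (⟨min j (m-1), by omega⟩ : Fin m) ≤ ⟨min k (m-1), by omega⟩ := by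
      simp only [Fin.mk_le_mk]; omega
    exact Subtype.coe_le_coe.mpr (e.monotone h1)
  have ht_strict : ∀ {j k : ℕ}, j < k → k ≤ m - 1 → t j < t k := by
    intro j k hjk hk
    have h1 : (⟨min j (m-1), by omega⟩ : Fin m) < ⟨min k (m-1), by omega⟩ := by
      simp only [Fin.mk_lt_mk]; omega
    exact Subtype.coe_lt_coe.mpr (e.strictMono h1)
  have ht_surj : ∀ x ∈ times X, ∃ j, j ≤ m - 1 ∧ t j = x := by
    intro x hx
    refine ⟨(e.symm ⟨x, hx⟩).val, by have := (e.symm ⟨x, hx⟩).isLt; omega, ?_⟩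
    have hfin : (⟨min (e.symm ⟨x, hx⟩).val (m-1), by omega⟩ : Fin m) = e.symm ⟨x, hx⟩ := by
      apply Fin.ext
      have := (e.symm ⟨x, hx⟩).isLt
      simp only []
      omega
    show (e ⟨min (e.symm ⟨x, hx⟩).val (m-1), by omega⟩ : ℝ) = x
    rw [hfin, OrderIso.apply_symm_apply]
  have htop : t (m-1) = tau X := by
    rw [htau]
    refine le_antisymm (Finset.le_max' _ _ (ht_mem _)) ?_
    obtain ⟨j, hj, hjt⟩ := ht_surj ((times X).max' hne) ((times X).max'_mem hne)
    rw [← hjt]; exact ht_mono hj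
  have himg : (times X).filter (fun v => v < tau X) = Finset.image t (Finset.range (m-1)) := by
    ext x
    simp only [Finset.mem_filter, Finset.mem_image, Finset.mem_range]
    constructor
    · rintro ⟨hx, hlt⟩
      obtain ⟨j, hj, hjt⟩ := ht_surj x hx
      refine ⟨j, ?_, hjt⟩
      rcases lt_or_eq_of_le hj with h | h
      · exact h
      · exfalso
        rw [h, htop] at hjt
        rw [← hjt] at hlt
        exact lt_irrefl _ hlt
    · rintro ⟨j, hj, rfl⟩
      exact ⟨ht_mem j, htop ▸ ht_strict hj le_rfl⟩
  rw [himg, Finset.sum_image (by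
    intro a ha b hb hab
    simp only [Finset.mem_coe, Finset.mem_range] at ha hb
    rcases lt_trichotomy a b with h | h | h
    · exact absurd hab (ne_of_lt (ht_strict h (by omega)))
    · exact h
    · exact absurd hab.symm (ne_of_lt (ht_strict h (by omega))))]
  have hstepj : ∀ j ∈ Finset.range (m-1),
      Jw X D (t j) * dN X D (t j)
        = Yat X (t j) * Jw X D (t j) - Yat X (t (j+1)) * Jw X D (t (j+1)) := by
    intro j hj
    simp only [Finset.mem_range] at hj
    apply step X D (ht_mem j) (ht_mem (j+1)) (ht_strict (Nat.lt_succ_self j) (by omega))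
    intro u hu huw
    obtain ⟨k, hk, rfl⟩ := ht_surj u hu
    by_contra h
    push_neg at h
    have hk2 : j + 1 ≤ k := by
      by_contra hk3
      push_neg at hk3
      exact absurd (ht_mono (by omega : k ≤ j)) (not_le.mpr h)
    exact absurd (ht_mono hk2) (not_le.mpr huw)
  rw [Finset.sum_congr rfl hstepj,
    Finset.sum_range_sub' (fun k => Yat X (t k) * Jw X D (t k)) (m-1)]
  have hmm : m - 1 + 0 = m - 1 := by omega
  have ht0 : ∀ x ∈ times X, t 0 ≤ x := by
    intro x hx
    obtain ⟨j, _, rfl⟩ := ht_surj x hx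
    exact ht_mono (Nat.zero_le _)
  have hY0 : Yat X (t 0) = n := by
    unfold Yat
    rw [Finset.filter_true_of_mem
      (fun i _ => ht0 (X i) (Finset.mem_image_of_mem X (Finset.mem_univ _)))]
    simp
  have hK0 : Kminus X D (t 0) = 1 := by
    unfold Kminus
    rw [Finset.filter_false_of_mem (fun u hu => not_lt.mpr (ht0 u hu)), Finset.prod_empty]
  have hG0 : Yat X (t 0) * Jw X D (t 0) = 1 := by
    rw [hY0]
    unfold Jw
    rw [hK0, mul_one]
    field_simp
  rw [htop, hG0]
  ring

end SurvStmt
end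
end
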